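/- Let N ≥ 2 and let ν_1,…,ν_N ∈ ℂ be pairwise distinct. Then for each j = 1,…,N and all λ_3,…,λ_N ∈ ℂ, the partition function vanishes when two of its arguments equal ν_j and ν_j − 1: Z_N(ν_j, ν_j − 1, λ_3,…,λ_N) = 0. -/

import Mathlib

open scoped BigOperators
noncomputable section

namespace SixVertex

/-- A spin configuration of the `N`-site quantum chain: one spin (`0` = up, `1` = down)
at each site. Site `k` of the paper (k = 1,…,N) corresponds to index `k-1 : Fin N`. -/
abbrev Cfg (N : ℕ) := Fin N → Fin 2

/-- Operators on the quantum space `H = (ℂ²)^{⊗N}`, represented as matrices in the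
standard (spin-configuration) basis. -/
abbrev Op (N : ℕ) := Matrix (Cfg N) (Cfg N) ℂ

/-- The operator acting as the 2×2 matrix `M` in the `k`-th tensor factor and as the
identity elsewhere. -/
def siteOp {N : ℕ} (k : Fin N) (M : Matrix (Fin 2) (Fin 2) ℂ) : Op N :=
  Matrix.of fun s s' => if ∀ i, i ≠ k → s i = s' i then M (s k) (s' k) else 0

def piPlus : Matrix (Fin 2) (Fin 2) ℂ := !![1, 0; 0, 0]
def piMinus : Matrix (Fin 2) (Fin 2) ℂ := !![0, 0; 0, 1]
def sigmaPlus : Matrix (Fin 2) (Fin 2) ℂ := !![0, 1; 0, 0]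
def sigmaMinus : Matrix (Fin 2) (Fin 2) ℂ := !![0, 0; 1, 0]

/-- Rational weight `a(λ,ν) = λ - ν + 1`. -/
def aW (l v : ℂ) : ℂ := l - v + 1
/-- Rational weight `b(λ,ν) = λ - ν`. -/
def bW (l v : ℂ) : ℂ := l - v

/-- The L-operator at site `k` (a 2×2 matrix in the auxiliary space, with entries
operators on the quantum space); the weight `c` equals `1`. -/
def Lop {N : ℕ} (ν : Fin N → ℂ) (k : Fin N) (l : ℂ) :
    Matrix (Fin 2) (Fin 2) (Op N) :=
  !![aW l (ν k) • siteOp k piPlus + bW l (ν k) • siteOp k piMinus,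
       siteOp k sigmaMinus;
     siteOp k sigmaPlus,
       bW l (ν k) • siteOp k piPlus + aW l (ν k) • siteOp k piMinus]

/-- The monodromy matrix `T(λ) = L_N(λ,ν_N) ⋯ L_1(λ,ν_1)`. -/
def monodromy {N : ℕ} (ν : Fin N → ℂ) (l : ℂ) :
    Matrix (Fin 2) (Fin 2) (Op N) :=
  (((List.finRange N).reverse).map fun k => Lop ν k l).prod

/-- The operator `A(λ)`. -/
def Aop {N : ℕ} (ν : Fin N → ℂ) (l : ℂ) : Op N := monodromy ν l 0 0
/-- The operator `B(λ)`. -/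
def Bop {N : ℕ} (ν : Fin N → ℂ) (l : ℂ) : Op N := monodromy ν l 0 1
/-- The operator `C(λ)`. -/
def Cop {N : ℕ} (ν : Fin N → ℂ) (l : ℂ) : Op N := monodromy ν l 1 0
/-- The operator `D(λ)`. -/
def Dop {N : ℕ} (ν : Fin N → ℂ) (l : ℂ) : Op N := monodromy ν l 1 1

/-- The all-spins-up configuration. -/
def upCfg (N : ℕ) : Cfg N := fun _ => 0
/-- The all-spins-down configuration. -/
def downCfg (N : ℕ) : Cfg N := fun _ => 1

/-- The basis vector of `H` corresponding to a spin configuration `s`. -/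
def basisVec {N : ℕ} (s : Cfg N) : Cfg N → ℂ := Pi.single s 1

/-- The all-spins-up vacuum vector `|⇑⟩`. -/
def upVec (N : ℕ) : Cfg N → ℂ := basisVec (upCfg N)
/-- The all-spins-down vector `|⇓⟩`. -/
def downVec (N : ℕ) : Cfg N → ℂ := basisVec (downCfg N)

/-- The partition function of the six-vertex model with domain wall boundary conditions:
`Z_N(λ_1,…,λ_N) = ⟨⇓| B(λ_N) ⋯ B(λ_1) |⇑⟩`. -/
def Zfun (N : ℕ) (ν : Fin N → ℂ) (lam : Fin N → ℂ) : ℂ :=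
  (((List.finRange N).reverse).map fun j => Bop ν (lam j)).prod (downCfg N) (upCfg N)

end SixVertex
end


namespace SixVertexAux
open SixVertex

variable {N : ℕ}

lemma siteOp_mul (k : Fin N) (A B : Matrix (Fin 2) (Fin 2) ℂ) :
    siteOp k A * siteOp k B = siteOp (N := N) k (A * B) := by
  ext s s'
  simp only [Matrix.mul_apply, siteOp, Matrix.of_apply]
  by_cases h : ∀ i, i ≠ k → s i = s' i
  · rw [if_pos h]
    have hinj : Function.Injective (Function.update s k : Fin 2 → Cfg N) := by
      intro x y hxy
      have := congrFun hxy k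
      simpa using this
    rw [← Finset.sum_subset (Finset.subset_univ
        ((Finset.univ : Finset (Fin 2)).image (Function.update s k)))
        (by
          intro t _ ht
          have : ¬ ∀ i, i ≠ k → s i = t i := by
            intro hall
            apply ht
            simp only [Finset.mem_image, Finset.mem_univ, true_and]
            exact ⟨t k, by
              funext i
              by_cases hi : i = k
              · subst hi; simp
              · simp [Function.update_of_ne hi, hall i hi]⟩
          rw [if_neg this, zero_mul]),
      Finset.sum_image (fun x _ y _ hxy => hinj hxy)]
    have hterm : ∀ x : Fin 2,
        (if ∀ i, i ≠ k → s i = Function.update s k x i then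
          A (s k) (Function.update s k x k) else 0) *
        (if ∀ i, i ≠ k → Function.update s k x i = s' i then
          B (Function.update s k x k) (s' k) else 0)
        = A (s k) x * B x (s' k) := by
      intro x
      rw [if_pos (fun i hi => by simp [Function.update_of_ne hi]),
        if_pos (fun i hi => by simp [Function.update_of_ne hi, h i hi]),
        Function.update_self]
    simp only [hterm]
  · rw [if_neg h]
    apply Finset.sum_eq_zero
    intro t _
    by_cases h1 : ∀ i, i ≠ k → s i = t i
    · by_cases h2 : ∀ i, i ≠ k → t i = s' i
      · exact absurd (fun i hi => (h1 i hi).trans (h2 i hi)) h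
      · rw [if_neg h2, mul_zero]
    · rw [if_neg h1, zero_mul]

end SixVertexAux
namespace SixVertexAux
open SixVertex

variable {N : ℕ}

lemma comm_helper {k k' : Fin N} (h : k ≠ k') (A B : Matrix (Fin 2) (Fin 2) ℂ)
    (s s' : Cfg N) :
    (∑ t : Cfg N, (if ∀ i, i ≠ k → s i = t i then A (s k) (t k) else 0) *
      (if ∀ i, i ≠ k' → t i = s' i then B (t k') (s' k') else 0)) =
    if ∀ i, i ≠ k → i ≠ k' → s i = s' i then A (s k) (s' k) * B (s k') (s' k')
      else 0 := by
  rw [Finset.sum_eq_single (Function.update s k (s' k))]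
  · have h1 : (∀ i, i ≠ k → s i = Function.update s k (s' k) i) := fun i hi => by
      rw [Function.update_of_ne hi]
    rw [if_pos h1, Function.update_self]
    have hiff : (∀ i, i ≠ k' → Function.update s k (s' k) i = s' i) ↔
        (∀ i, i ≠ k → i ≠ k' → s i = s' i) := by
      constructor
      · intro hall i hik hik'
        have := hall i hik'
        rwa [Function.update_of_ne hik] at this
      · intro hc i hik'
        by_cases hik : i = k
        · subst hik; simp
        · rw [Function.update_of_ne hik]; exact hc i hik hik'
    by_cases hc : ∀ i, i ≠ k → i ≠ k' → s i = s' i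
    · rw [if_pos (hiff.mpr hc), if_pos hc, Function.update_of_ne h.symm]
    · rw [if_neg (fun hx => hc (hiff.mp hx)), if_neg hc, mul_zero]
  · intro t _ ht
    by_cases h1 : ∀ i, i ≠ k → s i = t i
    · have hx : ¬ ∀ i, i ≠ k' → t i = s' i := by
        intro h2
        apply ht
        funext i
        by_cases hik : i = k
        · subst hik; simp [h2 i h]
        · rw [Function.update_of_ne hik, h1 i hik]
      rw [if_neg hx, mul_zero]
    · rw [if_neg h1, zero_mul]
  · intro hmem
    exact absurd (Finset.mem_univ _) hmem

lemma siteOp_comm {k k' : Fin N} (h : k ≠ k') (A B : Matrix (Fin 2) (Fin 2) ℂ) :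
    siteOp k A * siteOp k' B = siteOp k' B * siteOp k A := by
  ext s s'
  show (∑ t, _) = (∑ t, _)
  simp only [Matrix.mul_apply, siteOp, Matrix.of_apply]
  rw [comm_helper h A B s s', comm_helper h.symm B A s s']
  by_cases hc : ∀ i, i ≠ k → i ≠ k' → s i = s' i
  · rw [if_pos hc, if_pos (fun i h1 h2 => hc i h2 h1), mul_comm]
  · rw [if_neg hc, if_neg (fun hx => hc fun i h1 h2 => hx i h2 h1)]

lemma siteOp_zero (k : Fin N) : siteOp k (0 : Matrix (Fin 2) (Fin 2) ℂ) = 0 := by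
  ext s s'
  simp [siteOp]

lemma siteOp_add (k : Fin N) (A B : Matrix (Fin 2) (Fin 2) ℂ) :
    siteOp (N := N) k (A + B) = siteOp k A + siteOp k B := by
  ext s s'
  simp only [siteOp, Matrix.of_apply, Matrix.add_apply]
  split <;> simp

lemma siteOp_smul (k : Fin N) (x : ℂ) (A : Matrix (Fin 2) (Fin 2) ℂ) :
    siteOp (N := N) k (x • A) = x • siteOp k A := by
  ext s s'
  simp only [siteOp, Matrix.of_apply, Matrix.smul_apply]
  split <;> simp

end SixVertexAux
namespace SixVertexAux
open SixVertex

variable {N : ℕ}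

lemma commute_Lop_entry {k m : Fin N} (h : m ≠ k) (A : Matrix (Fin 2) (Fin 2) ℂ)
    (ν : Fin N → ℂ) (l : ℂ) (a b : Fin 2) :
    Commute (siteOp k A) (Lop ν m l a b) := by
  have base : ∀ B : Matrix (Fin 2) (Fin 2) ℂ, Commute (siteOp k A) (siteOp m B) :=
    fun B => siteOp_comm (Ne.symm h) A B
  have smulbase : ∀ (x : ℂ) (B : Matrix (Fin 2) (Fin 2) ℂ),
      Commute (siteOp k A) (x • siteOp m B) := fun x B => (base B).smul_right x
  have e00 : Lop ν m l 0 0 = aW l (ν m) • siteOp m piPlus + bW l (ν m) • siteOp m piMinus := rfl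
  have e01 : Lop ν m l 0 1 = siteOp m sigmaMinus := rfl
  have e10 : Lop ν m l 1 0 = siteOp m sigmaPlus := rfl
  have e11 : Lop ν m l 1 1 = bW l (ν m) • siteOp m piPlus + aW l (ν m) • siteOp m piMinus := rfl
  fin_cases a <;> fin_cases b
  · exact e00 ▸ (smulbase _ _).add_right (smulbase _ _)
  · exact e01 ▸ base _
  · exact e10 ▸ base _
  · exact e11 ▸ (smulbase _ _).add_right (smulbase _ _)

lemma commute_prod_entry {k : Fin N} (ν : Fin N → ℂ) (l : ℂ)
    (A : Matrix (Fin 2) (Fin 2) ℂ) :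
    ∀ (L : List (Fin N)), (∀ m ∈ L, m ≠ k) → ∀ a b : Fin 2,
      Commute (siteOp k A) (((L.map fun m => Lop ν m l).prod) a b) := by
  intro L
  induction L with
  | nil =>
      intro _ a b
      simp only [List.map_nil, List.prod_nil]
      by_cases hab : a = b <;> simp [Matrix.one_apply, hab, Commute.one_right, Commute.zero_right]
  | cons m L ih =>
      intro hmem a b
      simp only [List.map_cons, List.prod_cons, Matrix.mul_apply]
      apply Finset.sum_induction _ (fun x => Commute (siteOp k A) x)
      · exact fun x y hx hy => hx.add_right hy
      · exact Commute.zero_right _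
      · intro c _
        exact (commute_Lop_entry (hmem m List.mem_cons_self) A ν l a c).mul_right
          (ih (fun x hx => hmem x (List.mem_cons_of_mem m hx)) c b)

/-- Partial monodromy over the first `n` sites. -/
noncomputable def Tn (ν : Fin N → ℂ) (l : ℂ) (n : ℕ) : Matrix (Fin 2) (Fin 2) (Op N) :=
  ((((List.finRange N).take n).reverse).map fun k => Lop ν k l).prod

lemma Tn_zero (ν : Fin N → ℂ) (l : ℂ) : Tn ν l 0 = 1 := by
  simp [Tn]

lemma finRange_take_succ {n : ℕ} (h : n < N) :
    (List.finRange N).take (n + 1) = (List.finRange N).take n ++ [⟨n, h⟩] := by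
  rw [List.take_succ]
  congr 1
  rw [List.getElem?_eq_getElem (by simpa using h)]
  simp [List.getElem_finRange, Fin.cast]

lemma mem_finRange_take {n : ℕ} {x : Fin N} (hx : x ∈ (List.finRange N).take n) :
    (x : ℕ) < n := by
  induction n with
  | zero => simp at hx
  | succ n ih =>
      by_cases h : n < N
      · rw [finRange_take_succ h, List.mem_append] at hx
        rcases hx with hx | hx
        · exact Nat.lt_succ_of_lt (ih hx)
        · simp at hx
          subst hx
          exact Nat.lt_succ_self n
      · have hN : N ≤ n := Nat.le_of_not_lt h
        have : (List.finRange N).take (n+1) = List.finRange N := by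
          apply List.take_of_length_le
          simpa using Nat.le_succ_of_le hN
        rw [this] at hx
        exact lt_of_lt_of_le x.isLt (Nat.le_succ_of_le hN)

lemma Tn_succ (ν : Fin N → ℂ) (l : ℂ) {n : ℕ} (h : n < N) :
    Tn ν l (n + 1) = Lop ν ⟨n, h⟩ l * Tn ν l n := by
  rw [Tn, finRange_take_succ h, List.reverse_append]
  simp [Tn]

lemma Tn_full (ν : Fin N → ℂ) (l : ℂ) :
    Tn ν l N = monodromy ν l := by
  have h : (List.finRange N).take N = List.finRange N :=
    List.take_of_length_le (by simp)
  rw [Tn, h, monodromy]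

lemma commute_Tn_entry {k : Fin N} (ν : Fin N → ℂ) (l : ℂ)
    (A : Matrix (Fin 2) (Fin 2) ℂ) {n : ℕ} (hn : n ≤ (k : ℕ)) (a b : Fin 2) :
    Commute (siteOp k A) (Tn ν l n a b) := by
  apply commute_prod_entry
  intro m hm
  rw [List.mem_reverse] at hm
  have := mem_finRange_take hm
  intro hc
  subst hc
  omega

end SixVertexAux
namespace SixVertexAux
open SixVertex

variable {N : ℕ}

lemma commute_Lop_Tn {k : Fin N} {n : ℕ} (hn : n ≤ (k : ℕ)) (ν : Fin N → ℂ)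
    (l l' : ℂ) (a b c d : Fin 2) :
    Commute (Lop ν k l a b) (Tn ν l' n c d) := by
  have base : ∀ A : Matrix (Fin 2) (Fin 2) ℂ, Commute (siteOp k A) (Tn ν l' n c d) :=
    fun A => commute_Tn_entry ν l' A hn c d
  have smulbase : ∀ (x : ℂ) (A : Matrix (Fin 2) (Fin 2) ℂ),
      Commute (x • siteOp k A) (Tn ν l' n c d) := fun x A => (base A).smul_left x
  have e00 : Lop ν k l 0 0 = aW l (ν k) • siteOp k piPlus + bW l (ν k) • siteOp k piMinus := rfl
  have e01 : Lop ν k l 0 1 = siteOp k sigmaMinus := rfl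
  have e10 : Lop ν k l 1 0 = siteOp k sigmaPlus := rfl
  have e11 : Lop ν k l 1 1 = bW l (ν k) • siteOp k piPlus + aW l (ν k) • siteOp k piMinus := rfl
  fin_cases a <;> fin_cases b
  · exact e00 ▸ (smulbase _ _).add_left (smulbase _ _)
  · exact e01 ▸ base _
  · exact e10 ▸ base _
  · exact e11 ▸ (smulbase _ _).add_left (smulbase _ _)

lemma sum_mulVec {ι m n : Type*} [Fintype n] [DecidableEq ι] (s : Finset ι)
    (M : ι → Matrix m n ℂ) (v : n → ℂ) :
    (∑ i ∈ s, M i).mulVec v = ∑ i ∈ s, (M i).mulVec v := by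
  induction s using Finset.cons_induction with
  | empty => simp [Matrix.zero_mulVec]
  | cons a s ha ih => rw [Finset.sum_cons, Finset.sum_cons, Matrix.add_mulVec, ih]

/-- The vector `T(l')_{a1} T(l)_{b1} |⇑⟩` for the partial monodromies. -/
noncomputable def uu (ν : Fin N → ℂ) (l l' : ℂ) (n : ℕ) (a b : Fin 2) : Cfg N → ℂ :=
  (Tn ν l' n a 1 * Tn ν l n b 1).mulVec (upVec N)

lemma uu_zero_01 (ν : Fin N → ℂ) (l l' : ℂ) : uu ν l l' 0 0 1 = 0 := by
  rw [uu, Tn_zero, Tn_zero]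
  norm_num [Matrix.one_apply]

lemma uu_zero_10 (ν : Fin N → ℂ) (l l' : ℂ) : uu ν l l' 0 1 0 = 0 := by
  rw [uu, Tn_zero, Tn_zero]
  norm_num [Matrix.one_apply]

lemma uu_succ (ν : Fin N → ℂ) (l l' : ℂ) {n : ℕ} (h : n < N) (a b : Fin 2) :
    uu ν l l' (n + 1) a b =
      ∑ c : Fin 2, ∑ d : Fin 2,
        ((Lop ν ⟨n, h⟩ l' a c) * (Lop ν ⟨n, h⟩ l b d)).mulVec (uu ν l l' n c d) := by
  rw [uu, Tn_succ ν l' h, Tn_succ ν l h, Matrix.mul_apply, Matrix.mul_apply,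
    Finset.sum_mul_sum]
  rw [sum_mulVec]
  refine Finset.sum_congr rfl fun c _ => ?_
  rw [sum_mulVec]
  refine Finset.sum_congr rfl fun d _ => ?_
  have hcomm : Tn ν l' n c 1 * Lop ν ⟨n, h⟩ l b d = Lop ν ⟨n, h⟩ l b d * Tn ν l' n c 1 :=
    (commute_Lop_Tn (le_refl n) ν l l' b d c 1).symm.eq
  rw [show Lop ν ⟨n, h⟩ l' a c * Tn ν l' n c 1 * (Lop ν ⟨n, h⟩ l b d * Tn ν l n d 1)
      = Lop ν ⟨n, h⟩ l' a c * (Tn ν l' n c 1 * Lop ν ⟨n, h⟩ l b d) * Tn ν l n d 1 by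
        simp only [mul_assoc], hcomm, show Lop ν ⟨n, h⟩ l' a c * (Lop ν ⟨n, h⟩ l b d * Tn ν l' n c 1) *
      Tn ν l n d 1 = (Lop ν ⟨n, h⟩ l' a c * Lop ν ⟨n, h⟩ l b d) *
      (Tn ν l' n c 1 * Tn ν l n d 1) by simp only [mul_assoc]]
  rw [uu, ← Matrix.mulVec_mulVec]

end SixVertexAux
namespace SixVertexAux
open SixVertex

variable {N : ℕ}

lemma Lop_00 (ν : Fin N → ℂ) (k : Fin N) (l : ℂ) :
    Lop ν k l 0 0 = aW l (ν k) • siteOp k piPlus + bW l (ν k) • siteOp k piMinus := rfl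
lemma Lop_01 (ν : Fin N → ℂ) (k : Fin N) (l : ℂ) :
    Lop ν k l 0 1 = siteOp k sigmaMinus := rfl
lemma Lop_10 (ν : Fin N → ℂ) (k : Fin N) (l : ℂ) :
    Lop ν k l 1 0 = siteOp k sigmaPlus := rfl
lemma Lop_11 (ν : Fin N → ℂ) (k : Fin N) (l : ℂ) :
    Lop ν k l 1 1 = bW l (ν k) • siteOp k piPlus + aW l (ν k) • siteOp k piMinus := rfl

section MulTable

lemma pp_pp : piPlus * piPlus = piPlus := by
  ext i j
  fin_cases i <;> fin_cases j <;>
    simp [piPlus, piMinus, sigmaPlus, sigmaMinus, Matrix.mul_apply, Fin.sum_univ_two]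
lemma pp_pm : piPlus * piMinus = 0 := by
  ext i j
  fin_cases i <;> fin_cases j <;>
    simp [piPlus, piMinus, sigmaPlus, sigmaMinus, Matrix.mul_apply, Fin.sum_univ_two]
lemma pp_sp : piPlus * sigmaPlus = sigmaPlus := by
  ext i j
  fin_cases i <;> fin_cases j <;>
    simp [piPlus, piMinus, sigmaPlus, sigmaMinus, Matrix.mul_apply, Fin.sum_univ_two]
lemma pp_sm : piPlus * sigmaMinus = 0 := by
  ext i j
  fin_cases i <;> fin_cases j <;>
    simp [piPlus, piMinus, sigmaPlus, sigmaMinus, Matrix.mul_apply, Fin.sum_univ_two]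
lemma pm_pp : piMinus * piPlus = 0 := by
  ext i j
  fin_cases i <;> fin_cases j <;>
    simp [piPlus, piMinus, sigmaPlus, sigmaMinus, Matrix.mul_apply, Fin.sum_univ_two]
lemma pm_pm : piMinus * piMinus = piMinus := by
  ext i j
  fin_cases i <;> fin_cases j <;>
    simp [piPlus, piMinus, sigmaPlus, sigmaMinus, Matrix.mul_apply, Fin.sum_univ_two]
lemma pm_sp : piMinus * sigmaPlus = 0 := by
  ext i j
  fin_cases i <;> fin_cases j <;>
    simp [piPlus, piMinus, sigmaPlus, sigmaMinus, Matrix.mul_apply, Fin.sum_univ_two]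
lemma pm_sm : piMinus * sigmaMinus = sigmaMinus := by
  ext i j
  fin_cases i <;> fin_cases j <;>
    simp [piPlus, piMinus, sigmaPlus, sigmaMinus, Matrix.mul_apply, Fin.sum_univ_two]
lemma sp_pp : sigmaPlus * piPlus = 0 := by
  ext i j
  fin_cases i <;> fin_cases j <;>
    simp [piPlus, piMinus, sigmaPlus, sigmaMinus, Matrix.mul_apply, Fin.sum_univ_two]
lemma sp_pm : sigmaPlus * piMinus = sigmaPlus := by
  ext i j
  fin_cases i <;> fin_cases j <;>
    simp [piPlus, piMinus, sigmaPlus, sigmaMinus, Matrix.mul_apply, Fin.sum_univ_two]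
lemma sp_sp : sigmaPlus * sigmaPlus = 0 := by
  ext i j
  fin_cases i <;> fin_cases j <;>
    simp [piPlus, piMinus, sigmaPlus, sigmaMinus, Matrix.mul_apply, Fin.sum_univ_two]
lemma sp_sm : sigmaPlus * sigmaMinus = piPlus := by
  ext i j
  fin_cases i <;> fin_cases j <;>
    simp [piPlus, piMinus, sigmaPlus, sigmaMinus, Matrix.mul_apply, Fin.sum_univ_two]
lemma sm_pp : sigmaMinus * piPlus = sigmaMinus := by
  ext i j
  fin_cases i <;> fin_cases j <;>
    simp [piPlus, piMinus, sigmaPlus, sigmaMinus, Matrix.mul_apply, Fin.sum_univ_two]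
lemma sm_pm : sigmaMinus * piMinus = 0 := by
  ext i j
  fin_cases i <;> fin_cases j <;>
    simp [piPlus, piMinus, sigmaPlus, sigmaMinus, Matrix.mul_apply, Fin.sum_univ_two]
lemma sm_sp : sigmaMinus * sigmaPlus = piMinus := by
  ext i j
  fin_cases i <;> fin_cases j <;>
    simp [piPlus, piMinus, sigmaPlus, sigmaMinus, Matrix.mul_apply, Fin.sum_univ_two]
lemma sm_sm : sigmaMinus * sigmaMinus = 0 := by
  ext i j
  fin_cases i <;> fin_cases j <;>
    simp [piPlus, piMinus, sigmaPlus, sigmaMinus, Matrix.mul_apply, Fin.sum_univ_two]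

end MulTable

lemma key_eq (ν : Fin N → ℂ) (l : ℂ) :
    ∀ n, n ≤ N → uu ν l (l - 1) n 0 1 = uu ν l (l - 1) n 1 0 := by
  intro n
  induction n with
  | zero => intro _; rw [uu_zero_01, uu_zero_10]
  | succ n ih =>
      intro hn
      have h : n < N := hn
      have ihn := ih (Nat.le_of_succ_le hn)
      rw [uu_succ ν l (l - 1) h 0 1, uu_succ ν l (l - 1) h 1 0]
      simp only [Fin.sum_univ_two, Lop_00, Lop_01, Lop_10, Lop_11,
        add_mul, mul_add, smul_mul_assoc, mul_smul_comm, siteOp_mul,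
        pp_pp, pp_pm, pp_sp, pp_sm, pm_pp, pm_pm, pm_sp, pm_sm,
        sp_pp, sp_pm, sp_sp, sp_sm, sm_pp, sm_pm, sm_sp, sm_sm,
        siteOp_zero, smul_zero, zero_add, add_zero, smul_smul,
        Matrix.add_mulVec, Matrix.smul_mulVec, Matrix.zero_mulVec]
      rw [show uu ν l (l - 1) n 1 0 = uu ν l (l - 1) n 0 1 from ihn.symm]
      simp only [aW, bW]
      match_scalars <;> ring

end SixVertexAux
namespace SixVertexAux
open SixVertex

variable {N : ℕ}

private lemma crit00 (ν : Fin N → ℂ) (j : Fin N) {n : ℕ} (h : n < N)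
    (hsite : (⟨n, h⟩ : Fin N) = j)
    (hkey : uu ν (ν j) (ν j - 1) n 0 1 = uu ν (ν j) (ν j - 1) n 1 0) :
    uu ν (ν j) (ν j - 1) (n+1) 0 0 = 0 := by
  have ha : aW (ν j) (ν j) = 1 := by simp [aW]
  have hb : bW (ν j) (ν j) = 0 := by simp [bW]
  have ha' : aW (ν j - 1) (ν j) = 0 := by simp [aW]
  have hb' : bW (ν j - 1) (ν j) = -1 := by rw [bW]; ring
  rw [uu_succ ν (ν j) (ν j - 1) h 0 0, hsite]
  simp only [Fin.sum_univ_two, Lop_00, Lop_01, Lop_10, Lop_11,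
      ha, hb, ha', hb',
      add_mul, mul_add, smul_mul_assoc, mul_smul_comm, siteOp_mul,
      pp_pp, pp_pm, pp_sp, pp_sm, pm_pp, pm_pm, pm_sp, pm_sm,
      sp_pp, sp_pm, sp_sp, sp_sm, sm_pp, sm_pm, sm_sp, sm_sm,
      siteOp_zero, smul_zero, zero_add, add_zero, smul_smul,
      zero_smul, one_smul, zero_mul, mul_zero,
      Matrix.add_mulVec, Matrix.smul_mulVec, Matrix.zero_mulVec]
  rw [show uu ν (ν j) (ν j - 1) n 1 0 = uu ν (ν j) (ν j - 1) n 0 1 from hkey.symm]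
  match_scalars <;> ring

private lemma crit01 (ν : Fin N → ℂ) (j : Fin N) {n : ℕ} (h : n < N)
    (hsite : (⟨n, h⟩ : Fin N) = j)
    (hkey : uu ν (ν j) (ν j - 1) n 0 1 = uu ν (ν j) (ν j - 1) n 1 0) :
    uu ν (ν j) (ν j - 1) (n+1) 0 1 = 0 := by
  have ha : aW (ν j) (ν j) = 1 := by simp [aW]
  have hb : bW (ν j) (ν j) = 0 := by simp [bW]
  have ha' : aW (ν j - 1) (ν j) = 0 := by simp [aW]
  have hb' : bW (ν j - 1) (ν j) = -1 := by rw [bW]; ring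
  rw [uu_succ ν (ν j) (ν j - 1) h 0 1, hsite]
  simp only [Fin.sum_univ_two, Lop_00, Lop_01, Lop_10, Lop_11,
      ha, hb, ha', hb',
      add_mul, mul_add, smul_mul_assoc, mul_smul_comm, siteOp_mul,
      pp_pp, pp_pm, pp_sp, pp_sm, pm_pp, pm_pm, pm_sp, pm_sm,
      sp_pp, sp_pm, sp_sp, sp_sm, sm_pp, sm_pm, sm_sp, sm_sm,
      siteOp_zero, smul_zero, zero_add, add_zero, smul_smul,
      zero_smul, one_smul, zero_mul, mul_zero,
      Matrix.add_mulVec, Matrix.smul_mulVec, Matrix.zero_mulVec]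
  rw [show uu ν (ν j) (ν j - 1) n 1 0 = uu ν (ν j) (ν j - 1) n 0 1 from hkey.symm]
  match_scalars <;> ring

private lemma crit10 (ν : Fin N → ℂ) (j : Fin N) {n : ℕ} (h : n < N)
    (hsite : (⟨n, h⟩ : Fin N) = j)
    (hkey : uu ν (ν j) (ν j - 1) n 0 1 = uu ν (ν j) (ν j - 1) n 1 0) :
    uu ν (ν j) (ν j - 1) (n+1) 1 0 = 0 := by
  have ha : aW (ν j) (ν j) = 1 := by simp [aW]
  have hb : bW (ν j) (ν j) = 0 := by simp [bW]
  have ha' : aW (ν j - 1) (ν j) = 0 := by simp [aW]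
  have hb' : bW (ν j - 1) (ν j) = -1 := by rw [bW]; ring
  rw [uu_succ ν (ν j) (ν j - 1) h 1 0, hsite]
  simp only [Fin.sum_univ_two, Lop_00, Lop_01, Lop_10, Lop_11,
      ha, hb, ha', hb',
      add_mul, mul_add, smul_mul_assoc, mul_smul_comm, siteOp_mul,
      pp_pp, pp_pm, pp_sp, pp_sm, pm_pp, pm_pm, pm_sp, pm_sm,
      sp_pp, sp_pm, sp_sp, sp_sm, sm_pp, sm_pm, sm_sp, sm_sm,
      siteOp_zero, smul_zero, zero_add, add_zero, smul_smul,
      zero_smul, one_smul, zero_mul, mul_zero,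
      Matrix.add_mulVec, Matrix.smul_mulVec, Matrix.zero_mulVec]
  rw [show uu ν (ν j) (ν j - 1) n 1 0 = uu ν (ν j) (ν j - 1) n 0 1 from hkey.symm]
  match_scalars <;> ring

private lemma crit11 (ν : Fin N → ℂ) (j : Fin N) {n : ℕ} (h : n < N)
    (hsite : (⟨n, h⟩ : Fin N) = j)
    (hkey : uu ν (ν j) (ν j - 1) n 0 1 = uu ν (ν j) (ν j - 1) n 1 0) :
    uu ν (ν j) (ν j - 1) (n+1) 1 1 = 0 := by
  have ha : aW (ν j) (ν j) = 1 := by simp [aW]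
  have hb : bW (ν j) (ν j) = 0 := by simp [bW]
  have ha' : aW (ν j - 1) (ν j) = 0 := by simp [aW]
  have hb' : bW (ν j - 1) (ν j) = -1 := by rw [bW]; ring
  rw [uu_succ ν (ν j) (ν j - 1) h 1 1, hsite]
  simp only [Fin.sum_univ_two, Lop_00, Lop_01, Lop_10, Lop_11,
      ha, hb, ha', hb',
      add_mul, mul_add, smul_mul_assoc, mul_smul_comm, siteOp_mul,
      pp_pp, pp_pm, pp_sp, pp_sm, pm_pp, pm_pm, pm_sp, pm_sm,
      sp_pp, sp_pm, sp_sp, sp_sm, sm_pp, sm_pm, sm_sp, sm_sm,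
      siteOp_zero, smul_zero, zero_add, add_zero, smul_smul,
      zero_smul, one_smul, zero_mul, mul_zero,
      Matrix.add_mulVec, Matrix.smul_mulVec, Matrix.zero_mulVec]
  rw [show uu ν (ν j) (ν j - 1) n 1 0 = uu ν (ν j) (ν j - 1) n 0 1 from hkey.symm]
  match_scalars <;> ring

lemma key_zero (ν : Fin N → ℂ) (j : Fin N) :
    ∀ n, (j : ℕ) < n → n ≤ N → ∀ a b : Fin 2,
      uu ν (ν j) (ν j - 1) n a b = 0 := by
  intro n
  induction n with
  | zero => omega
  | succ n ih =>
      intro hjn hn a b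
      have h : n < N := hn
      by_cases hcase : (j : ℕ) < n
      · rw [uu_succ ν (ν j) (ν j - 1) h a b]
        simp only [Fin.sum_univ_two, ih hcase (Nat.le_of_succ_le hn),
          Matrix.mulVec_zero, add_zero]
      · have hnj : n = (j : ℕ) := by omega
        have hsite : (⟨n, h⟩ : Fin N) = j := Fin.ext hnj
        have hkey := key_eq ν (ν j) n (Nat.le_of_succ_le hn)
        fin_cases a <;> fin_cases b
        · exact crit00 ν j h hsite hkey
        · exact crit01 ν j h hsite hkey
        · exact crit10 ν j h hsite hkey
        · exact crit11 ν j h hsite hkey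

end SixVertexAux

open SixVertex SixVertexAux in
theorem Zfun_vanishing_aux (N : ℕ) (hN : 2 ≤ N) (ν : Fin N → ℂ)
    (j : Fin N) (lam : Fin N → ℂ) (hA : 0 < N) (hB : 1 < N)
    (h1 : lam ⟨0, hA⟩ = ν j) (h2 : lam ⟨1, hB⟩ = ν j - 1) :
    Zfun N ν lam = 0 := by
  have h0N : 0 < N := by omega
  have h1N : 1 < N := by omega
  -- split off the first two sites
  have ht1 : (List.finRange N).take 1 = [⟨0, h0N⟩] := by
    rw [show (1 : ℕ) = 0 + 1 from rfl, finRange_take_succ h0N]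
    simp
  have htake : (List.finRange N).take 2 = [⟨0, h0N⟩, ⟨1, h1N⟩] := by
    rw [show (2 : ℕ) = 1 + 1 from rfl, finRange_take_succ h1N, ht1]
    rfl
  have hsplit : List.finRange N =
      [(⟨0, h0N⟩ : Fin N), ⟨1, h1N⟩] ++ (List.finRange N).drop 2 := by
    conv_lhs => rw [← List.take_append_drop 2 (List.finRange N), htake]
  -- the two-row operator kills the vacuum
  have hBzero : ∀ s : Cfg N,
      (Bop ν (lam ⟨1, h1N⟩) * Bop ν (lam ⟨0, h0N⟩)) s (upCfg N) = 0 := by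
    intro s
    have hB0 : Bop ν (lam ⟨0, h0N⟩) = Tn ν (ν j) N 0 1 := by
      rw [h1, Bop, ← Tn_full]
    have hB1 : Bop ν (lam ⟨1, h1N⟩) = Tn ν (ν j - 1) N 0 1 := by
      rw [h2, Bop, ← Tn_full]
    have hu : uu ν (ν j) (ν j - 1) N 0 0 = 0 :=
      key_zero ν j N j.isLt (le_refl N) 0 0
    rw [uu] at hu
    have := congrFun hu s
    rw [hB0, hB1]
    have hup : upVec N = Pi.single (upCfg N) 1 := rfl
    rw [hup, Matrix.mulVec_single] at this
    simpa using this
  -- assemble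
  rw [Zfun, hsplit]
  rw [List.reverse_append, List.map_append, List.prod_append]
  simp only [List.reverse_cons, List.reverse_nil, List.nil_append, List.cons_append,
    List.map_cons, List.map_nil, List.prod_cons, List.prod_nil, mul_one]
  rw [Matrix.mul_apply]
  apply Finset.sum_eq_zero
  intro t _
  rw [hBzero t, mul_zero]


open SixVertex in
/-- for `N ≥ 2` and pairwise distinct `ν`, the partition function vanishes
whenever its first two arguments are `ν_j` and `ν_j - 1`:
`Z_N(ν_j, ν_j - 1, λ_3, …, λ_N) = 0`. -/
theorem Zfun_vanishing (N : ℕ) (hN : 2 ≤ N) (ν : Fin N → ℂ)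
    (hν : Function.Injective ν) (j : Fin N) (lam : Fin N → ℂ)
    (h1 : lam ⟨0, by omega⟩ = ν j) (h2 : lam ⟨1, by omega⟩ = ν j - 1) :
    Zfun N ν lam = 0 := by
  open SixVertexAux in
  exact Zfun_vanishing_aux N hN ν j lam (by omega) (by omega) h1 h2
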